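/- Let A be a set of parameters, f : A → A, and for each a ∈ A let W0(·,a), W1p(·,a) be differentiable real functions on an interval I, with W1m(x,a) := W1p(x,f(a)), and W(x,a) := W0(x,a) + W1p(x,a) - W1m(x,a). Suppose W0 satisfies the shape invariance condition W0(x,a)² - W0(x,f(a))² + ∂ₓW0(x,f(a)) + ∂ₓW0(x,a) = R(f(a)) for all x ∈ I, a ∈ A. If there exists a function ε : I → ℝ such that for all a ∈ A and x ∈ I: W1p(x,a)² + ∂ₓW1p(x,a) + W1m(x,a)² + ∂ₓW1m(x,a) - 2·W0(x,a)·W1m(x,a) + 2·W0(x,a)·W1p(x,a) - 2·W1m(x,a)·W1p(x,a) = ε(x), then W satisfies the same shape invariance condition: W(x,a)² - W(x,f(a))² + ∂ₓW(x,f(a)) + ∂ₓW(x,a) = R(f(a)) for all x ∈ I, a ∈ A. -/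

import Mathlib

/-- The generalized compatibility condition implies the shape invariance condition
for `W(x,a) = W0(x,a) + W1p(x,a) - W1p(x,f a)`. -/
theorem compatibility_implies_shape_invariance
    {A : Type*} (I : Set ℝ) (hI : IsOpen I)
    (f : A → A) (R : A → ℝ) (W0 W1p : A → ℝ → ℝ) (ε : ℝ → ℝ)
    (h0 : ∀ a, ∀ x ∈ I, DifferentiableAt ℝ (W0 a) x)
    (hp : ∀ a, ∀ x ∈ I, DifferentiableAt ℝ (W1p a) x)
    (hsi0 : ∀ a, ∀ x ∈ I,
      (W0 a x) ^ 2 - (W0 (f a) x) ^ 2 + deriv (W0 (f a)) x + deriv (W0 a) x = R (f a))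
    (hcc : ∀ a, ∀ x ∈ I,
      (W1p a x) ^ 2 + deriv (W1p a) x + (W1p (f a) x) ^ 2 + deriv (W1p (f a)) x
        - 2 * W0 a x * W1p (f a) x + 2 * W0 a x * W1p a x
        - 2 * W1p (f a) x * W1p a x = ε x) :
    ∀ a, ∀ x ∈ I,
      (W0 a x + W1p a x - W1p (f a) x) ^ 2
        - (W0 (f a) x + W1p (f a) x - W1p (f (f a)) x) ^ 2
        + deriv (fun y => W0 (f a) y + W1p (f a) y - W1p (f (f a)) y) x
        + deriv (fun y => W0 a y + W1p a y - W1p (f a) y) x = R (f a) := by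
  intro a x hx
  have d1 : deriv (fun y => W0 (f a) y + W1p (f a) y - W1p (f (f a)) y) x
      = deriv (W0 (f a)) x + deriv (W1p (f a)) x - deriv (W1p (f (f a))) x := by
    rw [deriv_fun_sub ((h0 (f a) x hx).fun_add (hp (f a) x hx)) (hp (f (f a)) x hx),
      deriv_fun_add (h0 (f a) x hx) (hp (f a) x hx)]
  have d2 : deriv (fun y => W0 a y + W1p a y - W1p (f a) y) x
      = deriv (W0 a) x + deriv (W1p a) x - deriv (W1p (f a)) x := by
    rw [deriv_fun_sub ((h0 a x hx).fun_add (hp a x hx)) (hp (f a) x hx),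
      deriv_fun_add (h0 a x hx) (hp a x hx)]
  rw [d1, d2]
  linear_combination hsi0 a x hx + hcc a x hx - hcc (f a) x hx
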